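/- Let A be a nonnegative n × n matrix whose row sums all equal 1 and whose column sums c_1,...,c_n satisfy ∑ (c_i - 1)² ≤ ε. Then cap(A) ≥ (1 - √(nε))^n, where cap(A) = inf { ∏_i (Ax)_i : x > 0, ∏_i x_i = 1 }. -/

import Mathlib

open Matrix Finset

private lemma min_sub_le_div {β s a : ℝ} (hβ : 0 < β) (ha : 0 ≤ a) :
    min 1 ((s + a) / β) - min 1 (s / β) ≤ a / β := by
  have h : (s + a) / β = s / β + a / β := add_div _ _ _
  have ha' : 0 ≤ a / β := div_nonneg ha hβ.le
  rw [h]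
  simp only [min_def]
  split_ifs <;> linarith

private lemma abel_aux (n : ℕ) (f u : ℕ → ℝ)
    (hu : ∀ m, m + 1 < n → u m ≤ u (m + 1))
    (hH : ∀ m, 0 ≤ ∑ k ∈ Finset.Ico m n, f k) :
    ∀ K a, n ≤ a + K →
      (∑ k ∈ Finset.Ico a n, f k) * u a ≤ ∑ m ∈ Finset.Ico a n, f m * u m := by
  intro K
  induction K with
  | zero =>
      intro a ha
      rw [Finset.Ico_eq_empty (by omega)]
      simp
  | succ K ih =>
      intro a ha
      by_cases h : n ≤ a + K
      · exact ih a h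
      · have han : a < n := by omega
        rw [Finset.sum_eq_sum_Ico_succ_bot han,
            Finset.sum_eq_sum_Ico_succ_bot han (f := fun m => f m * u m)]
        have h2 := ih (a + 1) (by omega)
        by_cases h3 : a + 1 < n
        · have h4 := hu a h3
          have h5 := hH (a + 1)
          have h6 : (∑ k ∈ Finset.Ico (a+1) n, f k) * u a
              ≤ (∑ k ∈ Finset.Ico (a+1) n, f k) * u (a + 1) :=
            mul_le_mul_of_nonneg_left h4 h5
          nlinarith [h2, h6]
        · have he : Finset.Ico (a+1) n = ∅ := Finset.Ico_eq_empty (by omega)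
          simp [he, add_mul]

private lemma counting {n : ℕ} (A : Matrix (Fin n) (Fin n) ℝ)
    (hpos : ∀ i j, 0 ≤ A i j) (hrow : ∀ i, ∑ j, A i j = 1)
    {δ : ℝ} (hδ0 : 0 ≤ δ) (hδ1 : δ < 1)
    (hcs : ∀ S : Finset (Fin n), ((S.card : ℝ)) - δ ≤ ∑ i, ∑ j ∈ S, A i j)
    (S : Finset (Fin n)) :
    (S.card : ℝ) ≤ ∑ i, min 1 ((∑ j ∈ S, A i j) / (1 - δ)) := by
  set β : ℝ := 1 - δ with hβdef
  have hβ : 0 < β := by simp [hβdef]; linarith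
  set a : Fin n → ℝ := fun i => ∑ j ∈ S, A i j with hadef
  have ha0 : ∀ i, 0 ≤ a i := fun i => Finset.sum_nonneg fun j _ => hpos i j
  have ha1 : ∀ i, a i ≤ 1 := by
    intro i
    rw [← hrow i]
    exact Finset.sum_le_sum_of_subset_of_nonneg (Finset.subset_univ S)
      (fun j _ _ => hpos i j)
  set T : Finset (Fin n) := Finset.univ.filter (fun i => β ≤ a i) with hTdef
  have hsplit : ∑ i, min 1 (a i / β)
      = ∑ i ∈ T, min 1 (a i / β) + ∑ i ∈ Tᶜ, min 1 (a i / β) :=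
    (Finset.sum_add_sum_compl T _).symm
  have hT1 : ∀ i ∈ T, min 1 (a i / β) = 1 := by
    intro i hi
    have : β ≤ a i := (Finset.mem_filter.mp hi).2
    exact min_eq_left ((one_le_div hβ).mpr this)
  have hTc : ∀ i ∈ Tᶜ, a i / β ≤ min 1 (a i / β) := by
    intro i hi
    have h1 : ¬ (β ≤ a i) := by
      have := Finset.mem_compl.mp hi
      simpa [hTdef] using this
    have : a i / β ≤ 1 := (div_le_one hβ).mpr (le_of_not_ge h1)
    exact le_min this le_rfl
  have hsumTc : ((S.card : ℝ) - δ - T.card) ≤ ∑ i ∈ Tᶜ, a i := by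
    have h1 : ∑ i ∈ T, a i ≤ (T.card : ℝ) := by
      calc ∑ i ∈ T, a i ≤ ∑ i ∈ T, 1 := Finset.sum_le_sum fun i _ => ha1 i
      _ = (T.card : ℝ) := by simp
    have h2 : ∑ i ∈ T, a i + ∑ i ∈ Tᶜ, a i = ∑ i, a i := Finset.sum_add_sum_compl T a
    have h3 := hcs S
    have h4 : ∑ i, a i = ∑ i, ∑ j ∈ S, A i j := rfl
    linarith
  by_cases hk : (S.card : ℝ) ≤ T.card
  · calc (S.card : ℝ) ≤ T.card := hk
      _ = ∑ i ∈ T, min 1 (a i / β) := by rw [Finset.sum_congr rfl hT1]; simp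
      _ ≤ _ := by
          rw [hsplit]
          have : 0 ≤ ∑ i ∈ Tᶜ, min 1 (a i / β) :=
            Finset.sum_nonneg fun i _ => le_min one_pos.le (div_nonneg (ha0 i) hβ.le)
          linarith
  · have hk2 : (T.card : ℝ) + 1 ≤ S.card := by
      have : (T.card : ℕ) < S.card := by exact_mod_cast not_le.mp hk
      exact_mod_cast this
    have hstep : ((S.card : ℝ) - δ - T.card) / β ≤ ∑ i ∈ Tᶜ, min 1 (a i / β) := by
      calc ((S.card : ℝ) - δ - T.card) / β ≤ (∑ i ∈ Tᶜ, a i) / β :=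
            (div_le_div_iff_of_pos_right hβ).mpr hsumTc
        _ = ∑ i ∈ Tᶜ, a i / β := by rw [Finset.sum_div]
        _ ≤ _ := Finset.sum_le_sum hTc
    have hfin : (S.card : ℝ) ≤ (T.card : ℝ) + ((S.card : ℝ) - δ - T.card) / β := by
      have h7 : ((S.card : ℝ) - T.card) * β ≤ (S.card : ℝ) - δ - T.card := by
        nlinarith [hk2, hδ0]
      have h8 : ((S.card : ℝ) - T.card) ≤ ((S.card : ℝ) - δ - T.card) / β :=
        (le_div_iff₀ hβ).mpr h7
      linarith
    calc (S.card : ℝ) ≤ (T.card : ℝ) + ((S.card : ℝ) - δ - T.card) / β := hfin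
      _ ≤ ∑ i ∈ T, min 1 (a i / β) + ∑ i ∈ Tᶜ, min 1 (a i / β) := by
          have : (T.card : ℝ) = ∑ i ∈ T, min 1 (a i / β) := by
            rw [Finset.sum_congr rfl hT1]; simp
          linarith [hstep, this.le]
      _ = _ := hsplit.symm

/-- The capacity of a nonnegative matrix. -/
noncomputable def matrixCap {n : ℕ} (A : Matrix (Fin n) (Fin n) ℝ) : ℝ :=
  sInf { r : ℝ | ∃ x : Fin n → ℝ,
    (∀ i, 0 < x i) ∧ ∏ i, x i = 1 ∧ ∏ i, (A.mulVec x) i = r }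

theorem cap_almost_doubly_stochastic (n : ℕ) (ε : ℝ) (hε : 0 ≤ ε) (hε' : ε ≤ 1 / n)
    (A : Matrix (Fin n) (Fin n) ℝ)
    (hpos : ∀ i j, 0 ≤ A i j)
    (hrow : ∀ i, ∑ j, A i j = 1)
    (hcol : ∑ j, ((∑ i, A i j) - 1) ^ 2 ≤ ε) :
    (1 - Real.sqrt (n * ε)) ^ n ≤ matrixCap A := by
  have hδ0 : 0 ≤ Real.sqrt (n * ε) := Real.sqrt_nonneg _
  have hnε1 : (n : ℝ) * ε ≤ 1 := by
    rcases Nat.eq_zero_or_pos n with h | h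
    · simp [h]
    · have hn : (0:ℝ) < n := by exact_mod_cast h
      calc (n:ℝ) * ε ≤ n * (1/n) := mul_le_mul_of_nonneg_left hε' hn.le
        _ = 1 := by field_simp
  have hδ1 : Real.sqrt (n * ε) ≤ 1 := by
    rw [show (1:ℝ) = Real.sqrt 1 by simp]
    exact Real.sqrt_le_sqrt hnε1
  set δ := Real.sqrt (n * ε) with hδdef
  have hδsq : δ ^ 2 = n * ε := Real.sq_sqrt (by positivity)
  apply le_csInf
  · refine ⟨1, fun _ => 1, fun _ => one_pos, by simp, ?_⟩
    have h1 : ∀ i, A.mulVec (fun _ => (1:ℝ)) i = 1 := by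
      intro i
      simp [Matrix.mulVec, dotProduct, hrow i]
    simp [h1]
  rintro r ⟨x, hx, hxprod, rfl⟩
  have hy0 : ∀ i, 0 ≤ A.mulVec x i := by
    intro i
    simp only [Matrix.mulVec, dotProduct]
    exact Finset.sum_nonneg fun j _ => mul_nonneg (hpos i j) (hx j).le
  rcases eq_or_lt_of_le hδ1 with hδeq | hδlt
  · -- δ = 1 : bound is 0
    rcases Nat.eq_zero_or_pos n with h | h
    · subst h; simp
    · rw [← hδeq]
      simp only [sub_self]
      rw [zero_pow (by omega)]
      exact Finset.prod_nonneg fun i _ => hy0 i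
  -- main case
  set β : ℝ := 1 - δ with hβdef
  have hβ : 0 < β := by rw [hβdef]; linarith
  have hβ1 : β ≤ 1 := by rw [hβdef]; linarith
  -- column sums lemma
  have hcs : ∀ S : Finset (Fin n), ((S.card : ℝ)) - δ ≤ ∑ i, ∑ j ∈ S, A i j := by
    intro S
    have h1 : ∑ i, ∑ j ∈ S, A i j = ∑ j ∈ S, ((∑ i, A i j) - 1) + S.card := by
      rw [show ∑ i, ∑ j ∈ S, A i j = ∑ j ∈ S, ∑ i, A i j from Finset.sum_comm]
      rw [Finset.sum_sub_distrib]
      simp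
    have h2 : (∑ j ∈ S, ((∑ i, A i j) - 1)) ^ 2 ≤ (S.card : ℝ) * ∑ j ∈ S, ((∑ i, A i j) - 1) ^ 2 := by
      exact_mod_cast sq_sum_le_card_mul_sum_sq (s := S)
        (f := fun j => (∑ i, A i j) - 1)
    have h3 : ∑ j ∈ S, ((∑ i, A i j) - 1) ^ 2 ≤ ε := by
      refine le_trans ?_ hcol
      exact Finset.sum_le_sum_of_subset_of_nonneg (Finset.subset_univ S)
        (fun j _ _ => sq_nonneg _)
    have h4 : (S.card : ℝ) ≤ n := by
      exact_mod_cast le_trans (Finset.card_le_univ S) (le_of_eq (Finset.card_fin n))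
    have h5 : (∑ j ∈ S, ((∑ i, A i j) - 1)) ^ 2 ≤ δ ^ 2 := by
      rw [hδsq]
      refine le_trans h2 ?_
      have hsq0 : 0 ≤ ∑ j ∈ S, ((∑ i, A i j) - 1) ^ 2 :=
        Finset.sum_nonneg fun j _ => sq_nonneg _
      exact mul_le_mul h4 h3 hsq0 (by positivity)
    have h6 : -δ ≤ ∑ j ∈ S, ((∑ i, A i j) - 1) := by nlinarith [h5, hδ0]
    linarith [h1, h6]
  -- sorting
  set t : Fin n → ℝ := fun j => Real.log (x j) with htdef
  set σ : Equiv.Perm (Fin n) := Tuple.sort t with hσdef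
  have hmono : Monotone (t ∘ σ) := Tuple.monotone_sort t
  -- the suffix sets
  set S : ℕ → Finset (Fin n) :=
    fun m => (Finset.univ.filter fun k : Fin n => m ≤ (k : ℕ)).image σ with hSdef
  have hfilcard : ∀ m : ℕ,
      ((Finset.univ : Finset (Fin n)).filter fun k : Fin n => m ≤ (k : ℕ)).card = n - m := by
    intro m
    have e1 := Finset.filter_map (f := Fin.valEmbedding)
      (s := (Finset.univ : Finset (Fin n))) (p := fun k : ℕ => m ≤ k)
    simp only [Function.comp_def, Fin.valEmbedding_apply] at e1
    have e2 : ((Finset.univ : Finset (Fin n)).map Fin.valEmbedding).filter (fun k : ℕ => m ≤ k)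
        = Finset.Ico m n := by
      rw [Fin.map_valEmbedding_univ, Nat.Iio_eq_range, Finset.range_eq_Ico,
        Finset.Ico_filter_le]
      congr 1
    have e3 : (((Finset.univ : Finset (Fin n)).filter fun k : Fin n => m ≤ (k : ℕ)).map
        Fin.valEmbedding).card = (Finset.Ico m n).card := by rw [← e1, e2]
    rw [Finset.card_map] at e3
    rw [e3, Nat.card_Ico]
  have hScard : ∀ m, (S m).card = n - m := by
    intro m
    simp only [hSdef]
    rw [Finset.card_image_of_injective _ σ.injective]
    exact hfilcard m
  have hS0 : S 0 = Finset.univ := by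
    simp only [hSdef]
    rw [show ((Finset.univ : Finset (Fin n)).filter fun k : Fin n => 0 ≤ (k : ℕ)) =
        Finset.univ from Finset.filter_true_of_mem fun k _ => Nat.zero_le _]
    exact Finset.image_univ_equiv σ
  have hSn : S n = ∅ := by
    simp only [hSdef]
    rw [Finset.filter_false_of_mem (fun k _ => Nat.not_le.mpr k.isLt), Finset.image_empty]
  have hSins : ∀ m (hm : m < n), σ ⟨m, hm⟩ ∉ S (m + 1) ∧
      S m = insert (σ ⟨m, hm⟩) (S (m + 1)) := by
    intro m hm
    have hfil : ((Finset.univ : Finset (Fin n)).filter fun k : Fin n => m ≤ (k : ℕ))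
        = insert ⟨m, hm⟩ ((Finset.univ : Finset (Fin n)).filter fun k : Fin n => m + 1 ≤ (k : ℕ)) := by
      ext k
      simp only [Finset.mem_filter, Finset.mem_insert, Finset.mem_univ, true_and, Fin.ext_iff]
      omega
    constructor
    · intro hmem
      simp only [hSdef, Finset.mem_image] at hmem
      obtain ⟨k, hk, hk2⟩ := hmem
      have hkk := σ.injective hk2
      subst hkk
      simp only [Finset.mem_filter] at hk
      omega
    · simp only [hSdef]
      rw [hfil, Finset.image_insert]
  have hrowsum : ∀ i m (hm : m < n),
      ∑ j ∈ S m, A i j = A i (σ ⟨m, hm⟩) + ∑ j ∈ S (m + 1), A i j := by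
    intro i m hm
    rw [(hSins m hm).2, Finset.sum_insert (hSins m hm).1]
  -- weights
  set F : Fin n → ℕ → ℝ := fun i m => min 1 ((∑ j ∈ S m, A i j) / β) with hFdef
  set G : ℕ → ℝ := fun m => ∑ i, F i m with hGdef
  set q : Fin n → Fin n → ℝ := fun i k => F i (k : ℕ) - F i ((k : ℕ) + 1) with hqdef
  have hF0 : ∀ i, F i 0 = 1 := by
    intro i
    simp only [hFdef]
    rw [hS0, hrow i]
    exact min_eq_left (one_le_one_div hβ hβ1)
  have hFn : ∀ i, F i n = 0 := by
    intro i
    simp only [hFdef]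
    rw [hSn]
    simp
  have hFanti : ∀ i m, F i (m + 1) ≤ F i m := by
    intro i m
    have hsub : S (m + 1) ⊆ S m := by
      simp only [hSdef]
      apply Finset.image_subset_image
      intro j hj
      simp only [Finset.mem_filter] at *
      exact ⟨hj.1, by omega⟩
    have hle : ∑ j ∈ S (m + 1), A i j ≤ ∑ j ∈ S m, A i j :=
      Finset.sum_le_sum_of_subset_of_nonneg hsub (fun j _ _ => hpos i j)
    exact min_le_min le_rfl (by gcongr)
  have hq0 : ∀ i k, 0 ≤ q i k := fun i k => sub_nonneg.mpr (hFanti i (k : ℕ))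
  have hqsum : ∀ i, ∑ k, q i k = 1 := by
    intro i
    simp only [hqdef]
    rw [Fin.sum_univ_eq_sum_range (fun m => F i m - F i (m + 1)) n]
    rw [Finset.sum_range_sub' (fun m => F i m)]
    rw [hF0 i, hFn i]
    ring
  have hqβ : ∀ i (k : Fin n), β * q i k ≤ A i (σ k) := by
    intro i k
    have h1' : ∑ j ∈ S (k : ℕ), A i j = ∑ j ∈ S ((k : ℕ) + 1), A i j + A i (σ k) := by
      rw [hrowsum i (k : ℕ) k.isLt]
      rw [Fin.eta]
      ring
    have h2 : q i k ≤ A i (σ k) / β := by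
      simp only [hqdef, hFdef]
      rw [h1']
      exact min_sub_le_div hβ (hpos _ _)
    calc β * q i k ≤ β * (A i (σ k) / β) := mul_le_mul_of_nonneg_left h2 hβ.le
      _ = A i (σ k) := mul_div_cancel₀ _ hβ.ne'
  -- per-row AM-GM
  have key : ∀ i, Real.exp (Real.log β + ∑ k, q i k * Real.log (x (σ k))) ≤ A.mulVec x i := by
    intro i
    set z : Fin n → ℝ := fun k => if q i k = 0 then 0 else A i (σ k) * x (σ k) / q i k with hzdef
    have hz0 : ∀ k, 0 ≤ z k := by
      intro k
      simp only [hzdef]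
      split_ifs with h
      · exact le_rfl
      · exact div_nonneg (mul_nonneg (hpos _ _) (hx _).le) (hq0 i k)
    have hqz : ∀ k, q i k * z k ≤ A i (σ k) * x (σ k) := by
      intro k
      simp only [hzdef]
      split_ifs with h
      · rw [h, zero_mul]
        exact mul_nonneg (hpos _ _) (hx _).le
      · rw [mul_comm, div_mul_cancel₀ _ h]
    have hstep1 : Real.exp (Real.log β + ∑ k, q i k * Real.log (x (σ k)))
        = ∏ k, (β * x (σ k)) ^ (q i k) := by
      have h1 : ∀ k : Fin n, (β * x (σ k)) ^ (q i k)
          = Real.exp ((Real.log β + Real.log (x (σ k))) * q i k) := by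
        intro k
        rw [Real.rpow_def_of_pos (mul_pos hβ (hx _)), Real.log_mul hβ.ne' (hx _).ne']
      rw [Finset.prod_congr rfl (fun k _ => h1 k), ← Real.exp_sum]
      congr 1
      have h2 : ∑ k, (Real.log β + Real.log (x (σ k))) * q i k
          = Real.log β * ∑ k, q i k + ∑ k, q i k * Real.log (x (σ k)) := by
        rw [Finset.mul_sum, ← Finset.sum_add_distrib]
        exact Finset.sum_congr rfl fun k _ => by ring
      rw [h2, hqsum i]
      ring
    have hstep2 : ∏ k, (β * x (σ k)) ^ (q i k) ≤ ∏ k, z k ^ (q i k) := by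
      apply Finset.prod_le_prod
      · intro k _
        exact Real.rpow_nonneg (mul_nonneg hβ.le (hx _).le) _
      · intro k _
        rcases eq_or_ne (q i k) 0 with h | h
        · rw [h, Real.rpow_zero, Real.rpow_zero]
        · have hqpos : 0 < q i k := (hq0 i k).lt_of_ne (Ne.symm h)
          apply Real.rpow_le_rpow (mul_nonneg hβ.le (hx _).le) ?_ (hq0 i k)
          simp only [hzdef, if_neg h]
          rw [le_div_iff₀ hqpos]
          calc β * x (σ k) * q i k = (β * q i k) * x (σ k) := by ring
            _ ≤ A i (σ k) * x (σ k) := mul_le_mul_of_nonneg_right (hqβ i k) (hx _).le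
    have hstep3 : ∏ k, z k ^ (q i k) ≤ ∑ k, q i k * z k :=
      Real.geom_mean_le_arith_mean_weighted Finset.univ (q i) z
        (fun k _ => hq0 i k) (hqsum i) (fun k _ => hz0 k)
    have hstep4 : ∑ k, q i k * z k ≤ A.mulVec x i := by
      have h1 : ∑ k, A i (σ k) * x (σ k) = A.mulVec x i := by
        rw [show A.mulVec x i = ∑ j, A i j * x j from by simp [Matrix.mulVec, dotProduct]]
        exact Equiv.sum_comp σ (fun j => A i j * x j)
      calc ∑ k, q i k * z k ≤ ∑ k, A i (σ k) * x (σ k) :=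
            Finset.sum_le_sum fun k _ => hqz k
        _ = _ := h1
    calc Real.exp (Real.log β + ∑ k, q i k * Real.log (x (σ k)))
        = ∏ k, (β * x (σ k)) ^ (q i k) := hstep1
      _ ≤ ∏ k, z k ^ (q i k) := hstep2
      _ ≤ ∑ k, q i k * z k := hstep3
      _ ≤ A.mulVec x i := hstep4
  -- Abel summation
  set u' : ℕ → ℝ := fun m => if h : m < n then Real.log (x (σ ⟨m, h⟩)) else 0 with hu'def
  have hu'k : ∀ k : Fin n, u' (k : ℕ) = Real.log (x (σ k)) := by
    intro k
    simp only [hu'def]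
    rw [dif_pos k.isLt]
  have hbridge : ∑ k : Fin n, (∑ i, q i k) * Real.log (x (σ k))
      = ∑ m ∈ Finset.range n, ((G m - G (m + 1)) * u' m) := by
    rw [← Fin.sum_univ_eq_sum_range (fun m => (G m - G (m + 1)) * u' m) n]
    apply Finset.sum_congr rfl
    intro k _
    have h1 : ∑ i, q i k = G (k : ℕ) - G ((k : ℕ) + 1) := by
      simp only [hqdef, hGdef]
      rw [Finset.sum_sub_distrib]
    rw [h1, hu'k k]
  have hsum0 : ∑ m ∈ Finset.range n, u' m = 0 := by
    rw [← Fin.sum_univ_eq_sum_range u' n]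
    rw [Finset.sum_congr rfl fun k _ => hu'k k]
    have h1 : ∑ k : Fin n, Real.log (x (σ k)) = ∑ j, Real.log (x j) :=
      Equiv.sum_comp σ (fun j => Real.log (x j))
    rw [h1, ← Real.log_prod (fun j _ => (hx j).ne'), hxprod, Real.log_one]
  have hGn : G n = 0 := by
    simp only [hGdef]
    exact Finset.sum_eq_zero fun i _ => hFn i
  have hG0 : G 0 = n := by
    simp only [hGdef]
    rw [Finset.sum_congr rfl fun i _ => hF0 i]
    simp
  have habel : 0 ≤ ∑ k : Fin n, (∑ i, q i k) * Real.log (x (σ k)) := by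
    set e : ℕ → ℝ := fun m => (G m - G (m + 1)) - 1 with hedef
    have hu : ∀ m, m + 1 < n → u' m ≤ u' (m + 1) := by
      intro m hm
      simp only [hu'def]
      rw [dif_pos (by omega : m < n), dif_pos hm]
      exact hmono (show (⟨m, by omega⟩ : Fin n) ≤ ⟨m + 1, hm⟩ from by
        simp [Fin.mk_le_mk])
    have htel : ∀ m, m ≤ n → ∑ k ∈ Finset.Ico m n, (G k - G (k + 1)) = G m - G n := by
      intro m hm
      rw [Finset.sum_Ico_eq_sub _ hm, Finset.sum_range_sub' G, Finset.sum_range_sub' G]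
      ring
    have hH : ∀ m, 0 ≤ ∑ k ∈ Finset.Ico m n, e k := by
      intro m
      by_cases hm : m < n
      · have hsplit : ∑ k ∈ Finset.Ico m n, e k
            = (G m - G n) - ((n - m : ℕ) : ℝ) := by
          simp only [hedef]
          rw [Finset.sum_sub_distrib, htel m hm.le, Finset.sum_const, Nat.card_Ico]
          simp
        rw [hsplit, hGn]
        have hc := counting A hpos hrow hδ0 hδlt hcs (S m)
        rw [hScard m, ← hβdef] at hc
        have hGm : G m = ∑ i, min 1 ((∑ j ∈ S m, A i j) / β) := by
          simp only [hGdef, hFdef]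
        rw [hGm]
        linarith
      · rw [Finset.Ico_eq_empty (by omega)]
        simp
    have hmain := abel_aux n e u' hu hH n 0 (by omega)
    rw [show Finset.Ico 0 n = Finset.range n from (Finset.range_eq_Ico n).symm] at hmain
    have hesum : ∑ k ∈ Finset.range n, e k = 0 := by
      simp only [hedef]
      rw [Finset.sum_sub_distrib, Finset.sum_range_sub' G, Finset.sum_const,
        Finset.card_range, hG0, hGn]
      simp
    rw [hesum, zero_mul] at hmain
    have hexp : ∑ m ∈ Finset.range n, (G m - G (m + 1)) * u' m
        = ∑ m ∈ Finset.range n, e m * u' m + ∑ m ∈ Finset.range n, u' m := by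
      rw [← Finset.sum_add_distrib]
      exact Finset.sum_congr rfl fun m _ => by simp only [hedef]; ring
    rw [hbridge, hexp, hsum0, add_zero]
    exact hmain
  -- final chain
  calc (1 - δ) ^ n = Real.exp (Real.log β) ^ n := by rw [Real.exp_log hβ, hβdef]
    _ = Real.exp (n * Real.log β) := by rw [← Real.exp_nat_mul]
    _ ≤ Real.exp (n * Real.log β + ∑ k, (∑ i, q i k) * Real.log (x (σ k))) :=
        Real.exp_le_exp.mpr (le_add_of_nonneg_right habel)
    _ = Real.exp (∑ i : Fin n, (Real.log β + ∑ k, q i k * Real.log (x (σ k)))) := by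
        congr 1
        have hswap : ∑ i : Fin n, ∑ k, q i k * Real.log (x (σ k))
            = ∑ k, (∑ i, q i k) * Real.log (x (σ k)) := by
          rw [Finset.sum_comm]
          exact Finset.sum_congr rfl fun k _ => by rw [Finset.sum_mul]
        rw [Finset.sum_add_distrib, Finset.sum_const, Finset.card_univ, Fintype.card_fin,
          nsmul_eq_mul, hswap]
    _ = ∏ i, Real.exp (Real.log β + ∑ k, q i k * Real.log (x (σ k))) := Real.exp_sum _ _
    _ ≤ ∏ i, A.mulVec x i := Finset.prod_le_prod (fun i _ => (Real.exp_pos _).le)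
        (fun i _ => key i)
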